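/- arXiv:1412.2490 — 6 statements merged into one kernel-verified Lean document; each statement's English description precedes it below -/
import Mathlib

section
/- Let G be a finite group, f a 2-cocycle on G with values in ℂ*, and a, b commuting elements of G. If u_a and u_b are the corresponding basis elements of the twisted group algebra ℂ^f G normalized so that u_g^{ord(g)} = 1 for each g, and u_a u_b = λ u_b u_a for a scalar λ ∈ ℂ*, then λ is a root of unity whose order divides gcd(ord(a), ord(b)). -/
/-- A 2-cocycle on `G` with values in `ℂ*`. -/
def IsCocycle {G : Type*} [Group G] (f : G → G → ℂˣ) : Prop :=
  ∀ x y z : G, f x y * f (x * y) z = f y z * f x (y * z)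

/-- Let `G` be a finite group, `f` a 2-cocycle on `G` with values in `ℂ*`, and `a, b`
commuting elements of `G`.  If `u_g` are the basis elements of the twisted group algebra
`ℂ^f G` (realized as units of a nontrivial `ℂ`-algebra `A` with `u_x u_y = f(x,y) u_{xy}`),
normalized so that `u_g ^ ord(g) = 1` for each `g`, and `u_a u_b = λ u_b u_a` for a scalar
`λ ∈ ℂ*`, then `λ` is a root of unity whose order divides `gcd(ord a, ord b)`. -/
theorem scalar_commutator_root_of_unity {G : Type*} [Group G] [Finite G]
    (f : G → G → ℂˣ) (hf : IsCocycle f)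
    {A : Type*} [Ring A] [Algebra ℂ A] [Nontrivial A]
    (u : G → Aˣ)
    (hu : ∀ x y : G, (u x : A) * (u y : A) = (f x y : ℂ) • (u (x * y) : A))
    (hnorm : ∀ g : G, (u g : A) ^ orderOf g = 1)
    {a b : G} (hab : Commute a b) (lam : ℂ) (hlam : lam ≠ 0)
    (hcomm : (u a : A) * (u b : A) = lam • ((u b : A) * (u a : A))) :
    lam ^ Nat.gcd (orderOf a) (orderOf b) = 1 := by
  have inj : Function.Injective (algebraMap ℂ A) := (algebraMap ℂ A).injective
  -- left powers of u a
  have key1 : ∀ k : ℕ, (u a : A) ^ k * (u b : A) = lam ^ k • ((u b : A) * (u a : A) ^ k) := by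
    intro k
    induction k with
    | zero => simp
    | succ k ih =>
      calc (u a : A) ^ (k + 1) * (u b : A)
          = (u a : A) * ((u a : A) ^ k * (u b : A)) := by
            rw [pow_succ', mul_assoc]
        _ = (u a : A) * (lam ^ k • ((u b : A) * (u a : A) ^ k)) := by rw [ih]
        _ = lam ^ k • (((u a : A) * (u b : A)) * (u a : A) ^ k) := by
            rw [mul_smul_comm, mul_assoc]
        _ = lam ^ k • ((lam • ((u b : A) * (u a : A))) * (u a : A) ^ k) := by rw [hcomm]
        _ = lam ^ (k + 1) • ((u b : A) * (u a : A) ^ (k + 1)) := by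
            rw [smul_mul_assoc, smul_smul, mul_assoc, ← pow_succ', ← pow_succ]
  have key2 : ∀ k : ℕ, (u a : A) * (u b : A) ^ k = lam ^ k • ((u b : A) ^ k * (u a : A)) := by
    intro k
    induction k with
    | zero => simp
    | succ k ih =>
      calc (u a : A) * (u b : A) ^ (k + 1)
          = ((u a : A) * (u b : A) ^ k) * (u b : A) := by rw [pow_succ, mul_assoc]
        _ = (lam ^ k • ((u b : A) ^ k * (u a : A))) * (u b : A) := by rw [ih]
        _ = lam ^ k • ((u b : A) ^ k * ((u a : A) * (u b : A))) := by
            rw [smul_mul_assoc, mul_assoc]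
        _ = lam ^ k • ((u b : A) ^ k * (lam • ((u b : A) * (u a : A)))) := by rw [hcomm]
        _ = lam ^ (k + 1) • ((u b : A) ^ (k + 1) * (u a : A)) := by
            rw [mul_smul_comm, smul_smul, ← mul_assoc, ← pow_succ, ← pow_succ]
  have ha : lam ^ orderOf a = 1 := by
    have := key1 (orderOf a)
    rw [hnorm a, one_mul, mul_one] at this
    have h2 : (1 : A) = lam ^ orderOf a • 1 := by
      calc (1 : A) = (u b : A) * ((u b)⁻¹ : Aˣ) := by simp
        _ = (lam ^ orderOf a • (u b : A)) * ((u b)⁻¹ : Aˣ) := by rw [← this]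
        _ = lam ^ orderOf a • 1 := by rw [smul_mul_assoc]; simp
    have : algebraMap ℂ A 1 = algebraMap ℂ A (lam ^ orderOf a) := by
      simpa [Algebra.algebraMap_eq_smul_one] using h2
    exact (inj this).symm
  have hb : lam ^ orderOf b = 1 := by
    have := key2 (orderOf b)
    rw [hnorm b, one_mul, mul_one] at this
    have h2 : (1 : A) = lam ^ orderOf b • 1 := by
      calc (1 : A) = ((u a)⁻¹ : Aˣ) * (u a : A) := by simp
        _ = ((u a)⁻¹ : Aˣ) * (lam ^ orderOf b • (u a : A)) := by rw [← this]
        _ = lam ^ orderOf b • 1 := by rw [mul_smul_comm]; simp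
    have : algebraMap ℂ A 1 = algebraMap ℂ A (lam ^ orderOf b) := by
      simpa [Algebra.algebraMap_eq_smul_one] using h2
    exact (inj this).symm
  have hda : orderOf lam ∣ orderOf a := orderOf_dvd_of_pow_eq_one ha
  have hdb : orderOf lam ∣ orderOf b := orderOf_dvd_of_pow_eq_one hb
  exact orderOf_dvd_iff_pow_eq_one.mp (Nat.dvd_gcd hda hdb)
end

section
/- Let G be the group of order p^4 (p an odd prime) generated by a, b, c with relations a^{p²} = b^p = c^p = 1, [a,b] = [b,c] = 1, [a,c] = b. Then for every 2-cocycle f ∈ Z²(G, ℂ*) (normalized so u_g^{ord(g)} = 1), the element a^p is f-regular; in particular G is not of central type. -/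
/-- An element `g` is `f`-regular if `α_f(g,x) = f(g,x)/f(x,g) = 1` for all
`x` in the centralizer of `g`. -/
def IsFRegular {G : Type*} [Group G] (f : G → G → ℂˣ) (g : G) : Prop :=
  ∀ x ∈ Subgroup.centralizer ({g} : Set G), f g x = f x g

/-- A 2-cocycle is nondegenerate if `1` is the only `f`-regular element. -/
def IsNondegenerate {G : Type*} [Group G] (f : G → G → ℂˣ) : Prop :=
  ∀ g : G, IsFRegular f g → g = 1

/-- A group is of central type if it admits a nondegenerate 2-cocycle. -/
def IsCentralType (G : Type*) [Group G] : Prop :=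
  ∃ f : G → G → ℂˣ, IsCocycle f ∧ IsNondegenerate f

namespace TwAux

variable {G : Type*} [Group G]

lemma one_left {f : G → G → ℂˣ} (hf : IsCocycle f) (x : G) : f 1 x = f 1 1 := by
  have h := hf 1 1 x
  simp only [one_mul] at h
  exact (mul_right_cancel h).symm

lemma one_right {f : G → G → ℂˣ} (hf : IsCocycle f) (x : G) : f x 1 = f 1 1 := by
  have h := hf x 1 1
  simp only [mul_one] at h
  exact mul_right_cancel h

@[ext]
structure Tw (F : {f : G → G → ℂˣ // IsCocycle f}) : Type _ where
  s : ℂˣ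
  g : G

variable {F : {f : G → G → ℂˣ // IsCocycle f}}

instance : Mul (Tw F) := ⟨fun x y => ⟨x.s * y.s * F.1 x.g y.g, x.g * y.g⟩⟩
instance : One (Tw F) := ⟨⟨(F.1 1 1)⁻¹, 1⟩⟩
instance : Inv (Tw F) := ⟨fun x => ⟨(x.s * F.1 x.g⁻¹ x.g * F.1 1 1)⁻¹, x.g⁻¹⟩⟩

@[simp] lemma mul_s (x y : Tw F) : (x * y).s = x.s * y.s * F.1 x.g y.g := rfl
@[simp] lemma mul_g (x y : Tw F) : (x * y).g = x.g * y.g := rfl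
@[simp] lemma one_s : (1 : Tw F).s = (F.1 1 1)⁻¹ := rfl
@[simp] lemma one_g : (1 : Tw F).g = 1 := rfl
@[simp] lemma inv_s (x : Tw F) : (x⁻¹).s = (x.s * F.1 x.g⁻¹ x.g * F.1 1 1)⁻¹ := rfl
@[simp] lemma inv_g (x : Tw F) : (x⁻¹).g = x.g⁻¹ := rfl

instance : Group (Tw F) where
  mul_assoc x y z := by
    ext
    · have h := congrArg Units.val (F.2 x.g y.g z.g)
      simp only [Units.val_mul] at h
      simp only [mul_s, mul_g, Units.val_mul]
      linear_combination (x.s.val * y.s.val * z.s.val) * h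
    · simp [mul_assoc]
  one_mul x := by
    ext
    · have h := congrArg Units.val (one_left F.2 x.g)
      simp only [mul_s, one_s, one_g, Units.val_mul, h, Units.val_inv_eq_inv_val]
      field_simp
    · simp
  mul_one x := by
    ext
    · have h := congrArg Units.val (one_right F.2 x.g)
      simp only [mul_s, one_s, one_g, Units.val_mul, h, Units.val_inv_eq_inv_val]
      field_simp
    · simp
  inv_mul_cancel x := by
    ext
    · simp only [mul_s, inv_s, inv_g, one_s, Units.val_mul, Units.val_inv_eq_inv_val]
      field_simp
    · simp

/-- the projection to `G` -/
def pr : Tw F →* G where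
  toFun := Tw.g
  map_one' := rfl
  map_mul' _ _ := rfl

lemma pow_g (x : Tw F) (n : ℕ) : (x ^ n).g = x.g ^ n := map_pow (pr (F := F)) x n

/-- central scalars -/
def Z (s : ℂˣ) : Tw F := ⟨s * (F.1 1 1)⁻¹, 1⟩

@[simp] lemma Z_s (s : ℂˣ) : (Z (F := F) s).s = s * (F.1 1 1)⁻¹ := rfl
@[simp] lemma Z_g (s : ℂˣ) : (Z (F := F) s).g = 1 := rfl

lemma Z_mul (s : ℂˣ) (x : Tw F) : Z s * x = ⟨s * x.s, x.g⟩ := by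
  ext
  · have h := congrArg Units.val (one_left F.2 x.g)
    simp only [mul_s, Z_s, Z_g, Units.val_mul, h, Units.val_inv_eq_inv_val]
    field_simp
  · simp

lemma mul_Z (s : ℂˣ) (x : Tw F) : x * Z s = ⟨s * x.s, x.g⟩ := by
  ext
  · have h := congrArg Units.val (one_right F.2 x.g)
    simp only [mul_s, Z_s, Z_g, Units.val_mul, h, Units.val_inv_eq_inv_val]
    field_simp
  · simp

lemma Z_comm (s : ℂˣ) (x : Tw F) : Z s * x = x * Z s := by rw [Z_mul, mul_Z]

lemma Z_mul_Z (s t : ℂˣ) : (Z s : Tw F) * Z t = Z (s * t) := by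
  rw [Z_mul]
  ext
  · simp only [Z_s, Units.val_mul]
    ring
  · simp

lemma Z_one : (Z 1 : Tw F) = 1 := by
  ext
  · simp
  · simp

lemma Z_pow (s : ℂˣ) (n : ℕ) : (Z s : Tw F) ^ n = Z (s ^ n) := by
  induction n with
  | zero => simp [Z_one]
  | succ k ih => rw [pow_succ, pow_succ, ih, Z_mul_Z]

lemma Z_inj {s t : ℂˣ} (h : (Z s : Tw F) = Z t) : s = t := by
  have h2 := congrArg Tw.s h
  simp only [Z_s] at h2
  exact mul_right_cancel h2

/-- canonical lifts -/
def U (F : {f : G → G → ℂˣ // IsCocycle f}) (x : G) : Tw F := ⟨1, x⟩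

@[simp] lemma U_s (x : G) : (U F x).s = 1 := rfl
@[simp] lemma U_g (x : G) : (U F x).g = x := rfl

lemma exists_Z_eq {x y : Tw F} (h : x.g = y.g) : ∃ s, x = Z s * y := by
  refine ⟨x.s * y.s⁻¹, ?_⟩
  rw [Z_mul]
  ext
  · simp
  · simp [h]

lemma exists_Z_eq' {x : Tw F} (h : x.g = 1) : ∃ s, x = Z s := by
  obtain ⟨s, hs⟩ := exists_Z_eq (y := (1 : Tw F)) (by simpa using h)
  exact ⟨s, by rw [hs, mul_one]⟩

lemma U_mul (x y : G) : U F x * U F y = Z (F.1 x y) * U F (x * y) := by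
  rw [Z_mul]
  ext
  · simp
  · simp

end TwAux

section GenGroup

variable {E : Type*} [Group E]

lemma comm_pow_right {x y z : E} (hz : ∀ e : E, z * e = e * z)
    (h : x * y = z * (y * x)) : ∀ k : ℕ, x * y ^ k = z ^ k * (y ^ k * x)
  | 0 => by simp
  | (k + 1) => by
    calc x * y ^ (k+1) = (x * y ^ k) * y := by rw [pow_succ, ← mul_assoc]
    _ = (z ^ k * (y ^ k * x)) * y := by rw [comm_pow_right hz h k]
    _ = z ^ k * (y ^ k * (x * y)) := by simp [mul_assoc]
    _ = z ^ k * (y ^ k * (z * (y * x))) := by rw [h]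
    _ = z ^ k * ((y ^ k * z) * (y * x)) := by simp [mul_assoc]
    _ = z ^ k * ((z * y ^ k) * (y * x)) := by rw [hz (y ^ k)]
    _ = z ^ (k+1) * (y ^ (k+1) * x) := by rw [pow_succ, pow_succ]; simp [mul_assoc]

lemma comm_pow_left {x y z : E} (hz : ∀ e : E, z * e = e * z)
    (h : x * y = z * (y * x)) : ∀ k : ℕ, x ^ k * y = z ^ k * (y * x ^ k)
  | 0 => by simp
  | (k + 1) => by
    have hzk : ∀ e : E, z ^ k * e = e * z ^ k := fun e =>
      (Commute.pow_left (hz e) k)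
    calc x ^ (k+1) * y = x * (x ^ k * y) := by rw [pow_succ', mul_assoc]
    _ = x * (z ^ k * (y * x ^ k)) := by rw [comm_pow_left hz h k]
    _ = (x * z ^ k) * (y * x ^ k) := by simp [mul_assoc]
    _ = (z ^ k * x) * (y * x ^ k) := by rw [← hzk x]
    _ = z ^ k * ((x * y) * x ^ k) := by simp [mul_assoc]
    _ = z ^ k * ((z * (y * x)) * x ^ k) := by rw [h]
    _ = z ^ k * (z * (y * (x * x ^ k))) := by simp [mul_assoc]
    _ = z ^ (k+1) * (y * x ^ (k+1)) := by rw [pow_succ, pow_succ']; simp [mul_assoc]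

lemma cmove {z : E} (hz : ∀ e : E, z * e = e * z) (e e' : E) :
    e * (z * e') = z * (e * e') := by
  rw [← mul_assoc, ← hz, mul_assoc]

lemma cpow {z : E} (hz : ∀ e : E, z * e = e * z) (k : ℕ) :
    ∀ e : E, z ^ k * e = e * z ^ k := fun e => Commute.pow_left (hz e) k

lemma twist_pow_left {X Y W z w : E} (hz : ∀ e : E, z * e = e * z)
    (hw : ∀ e : E, w * e = e * w)
    (hXY : X * Y = z * (Y * (W * X))) (hXW : X * W = w * (W * X)) :
    ∀ k : ℕ, X ^ k * Y = z ^ k * (w ^ (∑ i ∈ Finset.range k, i) * (Y * (W ^ k * X ^ k)))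
  | 0 => by simp
  | (k + 1) => by
    have hzk := cpow hz k
    have hwS := cpow hw (∑ i ∈ Finset.range k, i)
    have hwk := cpow hw k
    have hXWk := comm_pow_right hw hXW k
    have key : X * (Y * (W ^ k * X ^ k))
        = z * (w ^ k * (Y * (W ^ (k+1) * X ^ (k+1)))) := by
      calc X * (Y * (W ^ k * X ^ k)) = (X * Y) * (W ^ k * X ^ k) := by rw [mul_assoc]
      _ = (z * (Y * (W * X))) * (W ^ k * X ^ k) := by rw [hXY]
      _ = z * (Y * (W * (X * (W ^ k * X ^ k)))) := by simp only [mul_assoc]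
      _ = z * (Y * (W * ((X * W ^ k) * X ^ k))) := by rw [mul_assoc X (W ^ k)]
      _ = z * (Y * (W * ((w ^ k * (W ^ k * X)) * X ^ k))) := by rw [hXWk]
      _ = z * (Y * (W * (w ^ k * (W ^ k * (X * X ^ k))))) := by simp only [mul_assoc]
      _ = z * (Y * (w ^ k * (W * (W ^ k * (X * X ^ k))))) := by rw [cmove hwk W]
      _ = z * (w ^ k * (Y * (W * (W ^ k * (X * X ^ k))))) := by rw [cmove hwk Y]
      _ = z * (w ^ k * (Y * ((W * W ^ k) * (X * X ^ k)))) := by rw [mul_assoc W (W ^ k)]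
      _ = z * (w ^ k * (Y * (W ^ (k+1) * X ^ (k+1)))) := by rw [← pow_succ', ← pow_succ']
    calc X ^ (k+1) * Y = X * (X ^ k * Y) := by rw [pow_succ', mul_assoc]
    _ = X * (z ^ k * (w ^ (∑ i ∈ Finset.range k, i) * (Y * (W ^ k * X ^ k)))) := by
        rw [twist_pow_left hz hw hXY hXW k]
    _ = z ^ k * (w ^ (∑ i ∈ Finset.range k, i) * (X * (Y * (W ^ k * X ^ k)))) := by
        rw [cmove hzk X, cmove hwS X]
    _ = z ^ k * (w ^ (∑ i ∈ Finset.range k, i)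
          * (z * (w ^ k * (Y * (W ^ (k+1) * X ^ (k+1)))))) := by rw [key]
    _ = z ^ (k+1) * (w ^ ((∑ i ∈ Finset.range k, i) + k)
          * (Y * (W ^ (k+1) * X ^ (k+1)))) := by
        rw [cmove hz (w ^ (∑ i ∈ Finset.range k, i)), ← mul_assoc (z ^ k) z, ← pow_succ,
          ← mul_assoc (w ^ (∑ i ∈ Finset.range k, i)) (w ^ k), ← pow_add]
    _ = z ^ (k+1) * (w ^ (∑ i ∈ Finset.range (k+1), i)
          * (Y * (W ^ (k+1) * X ^ (k+1)))) := by rw [Finset.sum_range_succ]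

lemma twist_pow_right {X Y W z w : E} (hz : ∀ e : E, z * e = e * z)
    (hw : ∀ e : E, w * e = e * w)
    (hXY : X * Y = z * (Y * (W * X))) (hWY : W * Y = w * (Y * W)) :
    ∀ k : ℕ, X * Y ^ k = z ^ k * (w ^ (∑ i ∈ Finset.range k, i) * (Y ^ k * (W ^ k * X)))
  | 0 => by simp
  | (k + 1) => by
    have hzk := cpow hz k
    have hwS := cpow hw (∑ i ∈ Finset.range k, i)
    have hwk := cpow hw k
    have hWkY := comm_pow_left hw hWY k
    calc X * Y ^ (k+1) = (X * Y ^ k) * Y := by rw [pow_succ, ← mul_assoc]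
    _ = (z ^ k * (w ^ (∑ i ∈ Finset.range k, i) * (Y ^ k * (W ^ k * X)))) * Y := by
        rw [twist_pow_right hz hw hXY hWY k]
    _ = z ^ k * (w ^ (∑ i ∈ Finset.range k, i) * (Y ^ k * (W ^ k * (X * Y)))) := by
        simp only [mul_assoc]
    _ = z ^ k * (w ^ (∑ i ∈ Finset.range k, i)
          * (Y ^ k * (W ^ k * (z * (Y * (W * X)))))) := by rw [hXY]
    _ = z ^ (k+1) * (w ^ (∑ i ∈ Finset.range k, i)
          * (Y ^ k * (W ^ k * (Y * (W * X))))) := by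
        rw [cmove hz (W ^ k), cmove hz (Y ^ k),
          cmove hz (w ^ (∑ i ∈ Finset.range k, i)), ← mul_assoc (z ^ k) z, ← pow_succ]
    _ = z ^ (k+1) * (w ^ (∑ i ∈ Finset.range k, i)
          * (Y ^ k * ((W ^ k * Y) * (W * X)))) := by rw [mul_assoc (W ^ k) Y]
    _ = z ^ (k+1) * (w ^ (∑ i ∈ Finset.range k, i)
          * (Y ^ k * ((w ^ k * (Y * W ^ k)) * (W * X)))) := by rw [hWkY]
    _ = z ^ (k+1) * (w ^ (∑ i ∈ Finset.range k, i)
          * (Y ^ k * (w ^ k * (Y * (W ^ k * (W * X)))))) := by simp only [mul_assoc]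
    _ = z ^ (k+1) * (w ^ ((∑ i ∈ Finset.range k, i) + k)
          * (Y ^ k * (Y * ((W ^ k * W) * X)))) := by
        rw [cmove hwk (Y ^ k), ← mul_assoc (w ^ (∑ i ∈ Finset.range k, i)) (w ^ k),
          ← pow_add, ← mul_assoc (W ^ k) W]
    _ = z ^ (k+1) * (w ^ (∑ i ∈ Finset.range (k+1), i)
          * (Y ^ (k+1) * (W ^ (k+1) * X))) := by
        rw [Finset.sum_range_succ, ← mul_assoc (Y ^ k) Y, ← pow_succ, ← pow_succ]

end GenGroup

open TwAux in
theorem helper_fRegular {p : ℕ} (hp : p.Prime) (hodd : Odd p)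
    {G : Type*} [Group G] (a b c : G)
    (hcard : Nat.card G = p ^ 4)
    (hgen : Subgroup.closure ({a, b, c} : Set G) = ⊤)
    (ha : orderOf a = p ^ 2) (hb : orderOf b = p) (hc : orderOf c = p)
    (hab : Commute a b) (hbc : Commute b c)
    (hac : a * c * a⁻¹ * c⁻¹ = b) :
    (∀ f : G → G → ℂˣ, IsCocycle f → ∀ x : G, f (a ^ p) x = f x (a ^ p)) := by
  obtain ⟨m, hm⟩ : ∃ m, p = 2 * m + 1 := hodd
  have hb1 : b ^ p = 1 := by rw [← hb]; exact pow_orderOf_eq_one b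
  have hc1 : c ^ p = 1 := by rw [← hc]; exact pow_orderOf_eq_one c
  have h1 : a * c = b * (c * a) := by rw [← hac]; group
  have hacRel : a * c = c * (b * a) := by
    rw [h1, ← mul_assoc, hbc.eq, mul_assoc]
  intro f hf
  set F : {f : G → G → ℂˣ // IsCocycle f} := ⟨f, hf⟩ with hF
  obtain ⟨lam, hlam⟩ : ∃ s, U F a * U F c = Z s * (U F c * (U F b * U F a)) := by
    apply exists_Z_eq
    simpa using hacRel
  obtain ⟨zab, hzab⟩ : ∃ s, U F a * U F b = Z s * (U F b * U F a) := by
    apply exists_Z_eq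
    simpa using hab.eq
  obtain ⟨zbc, hzbc⟩ : ∃ s, U F b * U F c = Z s * (U F c * U F b) := by
    apply exists_Z_eq
    simpa using hbc.eq
  obtain ⟨sb, hsb⟩ : ∃ s, (U F b) ^ p = Z s := by
    apply exists_Z_eq'
    simp [pow_g, hb1]
  obtain ⟨sc, hsc⟩ : ∃ s, (U F c) ^ p = Z s := by
    apply exists_Z_eq'
    simp [pow_g, hc1]
  obtain ⟨mu, hmu⟩ : ∃ s, (U F a) ^ p = Z s * U F (a ^ p) := by
    apply exists_Z_eq
    simp [pow_g]
  have hZ : ∀ (s : ℂˣ) (e : Tw F), Z s * e = e * Z s := Z_comm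
  -- zab ^ p = 1
  have hzabp : zab ^ p = 1 := by
    have h1 := comm_pow_right (hZ zab) hzab p
    rw [hsb, Z_pow] at h1
    rw [← Z_comm sb (U F a), ← mul_assoc, Z_mul_Z] at h1
    have h2 := Z_inj (mul_right_cancel h1)
    exact right_eq_mul.mp h2
  -- zbc ^ p = 1
  have hzbcp : zbc ^ p = 1 := by
    have h1 := comm_pow_left (hZ zbc) hzbc p
    rw [hsb, Z_pow, ← Z_comm sb (U F c), ← mul_assoc, Z_mul_Z] at h1
    have h2 := Z_inj (mul_right_cancel h1)
    exact right_eq_mul.mp h2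
  -- sums of ranges
  have hSig : ∀ u : ℂˣ, u ^ p = 1 → u ^ (∑ i ∈ Finset.range p, i) = 1 := by
    intro u hu
    set v := u ^ (∑ i ∈ Finset.range p, i) with hvdef
    have hv2 : v ^ 2 = 1 := by
      rw [hvdef, ← pow_mul, Finset.sum_range_id_mul_two, pow_mul, hu, one_pow]
    have hvp : v ^ p = 1 := by
      rw [hvdef, ← pow_mul, mul_comm, pow_mul, hu, one_pow]
    rw [hm, pow_succ, pow_mul, hv2, one_pow, one_mul] at hvp
    exact hvp
  -- key : lam ^ p * sb = 1
  have klam : lam ^ p * sb = 1 := by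
    have h3 := twist_pow_right (hZ lam) (hZ zbc) hlam hzbc p
    rw [hsc, hsb, Z_pow, Z_pow, hSig zbc hzbcp, Z_one, one_mul] at h3
    rw [← Z_comm sc (U F a), ← mul_assoc, ← mul_assoc, Z_mul_Z, Z_mul_Z] at h3
    have h4 := Z_inj (mul_right_cancel h3)
    rw [mul_assoc, mul_comm sc sb, ← mul_assoc] at h4
    exact right_eq_mul.mp h4
  -- (U F a)^p commutes with U F c
  have hXpY : (U F a) ^ p * U F c = U F c * (U F a) ^ p := by
    have h6 := twist_pow_left (hZ lam) (hZ zab) hlam hzab p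
    rw [hsb, Z_pow, Z_pow, hSig zab hzabp, Z_one, one_mul] at h6
    rw [cmove (hZ sb) (U F c) ((U F a) ^ p), ← mul_assoc, Z_mul_Z, klam, Z_one,
      one_mul] at h6
    exact h6
  -- (U F a)^p commutes with U F b
  have hXpW : (U F a) ^ p * U F b = U F b * (U F a) ^ p := by
    have h7 := comm_pow_left (hZ zab) hzab p
    rw [Z_pow, hzabp, Z_one, one_mul] at h7
    exact h7
  have hmu' : U F (a ^ p) = Z mu⁻¹ * (U F a) ^ p := by
    rw [hmu, ← mul_assoc, Z_mul_Z, inv_mul_cancel, Z_one, one_mul]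
  have hComZ : ∀ (s : ℂˣ) (e : Tw F), Commute e (Z s) := fun s e => (Z_comm s e).symm
  have hCom : ∀ x : G, Commute (U F (a ^ p)) (U F x) := by
    intro x
    have hx : x ∈ Subgroup.closure ({a, b, c} : Set G) := by
      rw [hgen]; exact Subgroup.mem_top x
    refine Subgroup.closure_induction ?_ ?_ ?_ ?_ hx
    · intro x hx
      simp only [Set.mem_insert_iff, Set.mem_singleton_iff] at hx
      rcases hx with rfl | rfl | rfl
      · rw [hmu']
        exact Commute.mul_left ((Z_comm mu⁻¹ (U F x)) : Commute _ _)
          ((Commute.refl (U F x)).pow_left p)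
      · rw [hmu']
        exact Commute.mul_left ((Z_comm mu⁻¹ (U F x)) : Commute _ _) hXpW
      · rw [hmu']
        exact Commute.mul_left ((Z_comm mu⁻¹ (U F x)) : Commute _ _) hXpY
    · have hU1 : U F (1 : G) = (Z (F.1 1 1) : Tw F) := by
        ext
        · simp
        · simp
      rw [hU1]
      exact hComZ _ _
    · intro x y _ _ hcx hcy
      have hxy : U F (x * y) = Z (F.1 x y)⁻¹ * (U F x * U F y) := by
        rw [U_mul, ← mul_assoc, Z_mul_Z, inv_mul_cancel, Z_one, one_mul]
      rw [hxy]
      exact Commute.mul_right (hComZ _ _) (hcx.mul_right hcy)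
    · intro x _ hcx
      obtain ⟨t, ht⟩ : ∃ t, U F x⁻¹ = Z t * (U F x)⁻¹ := by
        apply exists_Z_eq
        simp
      rw [ht]
      exact Commute.mul_right (hComZ _ _) hcx.inv_right
  intro x
  have h8 := (hCom x).eq
  have h9 := congrArg Tw.s h8
  simp only [mul_s, U_s, one_mul, mul_one] at h9
  exact h9

/-- Let `G` be the group of order `p^4` (`p` an odd prime) generated by `a, b, c` with
relations `a^{p²} = b^p = c^p = 1`, `[a,b] = [b,c] = 1`, `[a,c] = b`.  Then for every
2-cocycle `f ∈ Z²(G, ℂ*)` the element `a^p` is `f`-regular; in particular `G` is not of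
central type. -/
theorem apow_fRegular_of_group_x {p : ℕ} (hp : p.Prime) (hodd : Odd p)
    {G : Type*} [Group G] (a b c : G)
    (hcard : Nat.card G = p ^ 4)
    (hgen : Subgroup.closure ({a, b, c} : Set G) = ⊤)
    (ha : orderOf a = p ^ 2) (hb : orderOf b = p) (hc : orderOf c = p)
    (hab : Commute a b) (hbc : Commute b c)
    (hac : a * c * a⁻¹ * c⁻¹ = b) :
    (∀ f : G → G → ℂˣ, IsCocycle f → IsFRegular f (a ^ p)) ∧ ¬ IsCentralType G := by
  have main : ∀ f : G → G → ℂˣ, IsCocycle f → ∀ x : G, f (a ^ p) x = f x (a ^ p) :=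
    helper_fRegular hp hodd a b c hcard hgen ha hb hc hab hbc hac
  constructor
  · intro f hf x _
    exact main f hf x
  · rintro ⟨f, hf, hnd⟩
    have h1 : a ^ p = 1 := hnd _ (fun x _ => main f hf x)
    have h2 : orderOf a ∣ p := orderOf_dvd_of_pow_eq_one h1
    rw [ha] at h2
    have h3 := Nat.le_of_dvd hp.pos h2
    have h4 : p < p ^ 2 := by nlinarith [hp.two_le]
    omega
end

section
/- Let G be the group of order p^4 (p an odd prime) generated by a, b, c with relations a^{p²} = b^p = c^p = 1, [a,b] = [b,c] = 1, [a,c] = a^p. Then for every 2-cocycle f ∈ Z²(G, ℂ*), the element a^p is f-regular; in particular G is not of central type. -/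
section Twist

variable {G : Type*} [Group G] {f : G → G → ℂˣ}

lemma IsCocycle.one_right (hf : IsCocycle f) (g : G) : f g 1 = f 1 1 := by
  have h := hf g 1 1
  simp only [mul_one] at h
  exact mul_right_cancel h

lemma IsCocycle.one_left (hf : IsCocycle f) (g : G) : f 1 g = f 1 1 := by
  have h := hf 1 1 g
  simp only [one_mul] at h
  exact (mul_right_cancel h).symm

lemma IsCocycle.inv_pair (hf : IsCocycle f) (g : G) : f g g⁻¹ = f g⁻¹ g := by
  have h := hf g g⁻¹ g
  simp only [mul_inv_cancel, inv_mul_cancel] at h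
  rw [hf.one_left g, hf.one_right g] at h
  exact mul_right_cancel h

/-- The twisted central extension `ℂˣ ×_f G`. -/
def Tw (f : G → G → ℂˣ) (_hf : IsCocycle f) : Type _ := ℂˣ × G

namespace Tw

variable {hf : IsCocycle f}

def mk (hf : IsCocycle f) (s : ℂˣ) (g : G) : Tw f hf := (s, g)

def sc (x : Tw f hf) : ℂˣ := Prod.fst x

def base (x : Tw f hf) : G := Prod.snd x

lemma ext {x y : Tw f hf} (h1 : x.sc = y.sc) (h2 : x.base = y.base) : x = y :=
  Prod.ext h1 h2

instance : Mul (Tw f hf) := ⟨fun x y => mk hf (x.sc * y.sc * f x.base y.base) (x.base * y.base)⟩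
instance : One (Tw f hf) := ⟨mk hf (f 1 1)⁻¹ 1⟩
instance : Inv (Tw f hf) :=
  ⟨fun x => mk hf (x.sc⁻¹ * (f x.base x.base⁻¹)⁻¹ * (f 1 1)⁻¹) x.base⁻¹⟩

@[simp] lemma sc_mk (s : ℂˣ) (g : G) : (mk hf s g).sc = s := rfl
@[simp] lemma base_mk (s : ℂˣ) (g : G) : (mk hf s g).base = g := rfl
@[simp] lemma sc_mul (x y : Tw f hf) : (x * y).sc = x.sc * y.sc * f x.base y.base := rfl
@[simp] lemma base_mul (x y : Tw f hf) : (x * y).base = x.base * y.base := rfl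
@[simp] lemma sc_one : (1 : Tw f hf).sc = (f 1 1)⁻¹ := rfl
@[simp] lemma base_one : (1 : Tw f hf).base = 1 := rfl
@[simp] lemma base_inv (x : Tw f hf) : (x⁻¹).base = x.base⁻¹ := rfl
lemma sc_inv (x : Tw f hf) : (x⁻¹).sc = x.sc⁻¹ * (f x.base x.base⁻¹)⁻¹ * (f 1 1)⁻¹ := rfl

instance instGroupTw : Group (Tw f hf) :=
  Group.ofLeftAxioms
    (fun x y z => by
      refine ext ?_ (mul_assoc _ _ _)
      have h := hf x.base y.base z.base
      simp only [sc_mul, base_mul]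
      have h' := congrArg Units.val h
      simp only [Units.val_mul] at h'
      refine Units.ext ?_
      simp only [Units.val_mul]
      linear_combination (x.sc * y.sc * z.sc : ℂ) * h')
    (fun x => by
      refine ext ?_ (one_mul _)
      simp only [sc_mul, base_one, sc_one, one_mul, hf.one_left x.base]
      rw [mul_comm]
      exact mul_inv_cancel_left _ _)
    (fun x => by
      refine ext ?_ (inv_mul_cancel _)
      simp only [sc_mul, base_inv, sc_inv, sc_one, base_one, inv_mul_cancel,
        hf.inv_pair x.base]
      refine Units.ext ?_
      simp only [Units.val_mul, Units.val_inv_eq_inv_val]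
      field_simp)

end Tw

end Twist

section MoreTw

variable {G : Type*} [Group G] {f : G → G → ℂˣ} {hf : IsCocycle f}

namespace Tw

def proj (hf : IsCocycle f) : Tw f hf →* G where
  toFun := base
  map_one' := rfl
  map_mul' := fun _ _ => rfl

lemma base_pow (x : Tw f hf) (n : ℕ) : (x ^ n).base = x.base ^ n :=
  map_pow (proj hf) x n

lemma central_of {x : Tw f hf} (hx : x.base = 1) (y : Tw f hf) : x * y = y * x := by
  refine ext ?_ ?_
  · simp only [sc_mul, hx, hf.one_left y.base, hf.one_right y.base]
    rw [mul_comm x.sc y.sc]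
  · simp only [base_mul, hx, one_mul, mul_one]

lemma commute_of_base_eq {t x y : Tw f hf} (hbase : x.base = y.base) (h : Commute t x) :
    Commute t y := by
  have h1 : (y * x⁻¹).base = 1 := by simp [base_mul, base_inv, hbase]
  have h2 : Commute t (y * x⁻¹) := (central_of h1 t).symm
  have h3 := h2.mul_right h
  rwa [inv_mul_cancel_right] at h3

end Tw

end MoreTw

lemma central_conj_commutator {H : Type*} [Group H] {z₁ z₂ x y : H}
    (h1 : ∀ t, z₁ * t = t * z₁) (h2 : ∀ t, z₂ * t = t * z₂) :
    (z₁ * x) * (z₂ * y) * (z₁ * x)⁻¹ * (z₂ * y)⁻¹ = x * y * x⁻¹ * y⁻¹ := by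
  have i1 : ∀ t : H, z₁⁻¹ * t = t * z₁⁻¹ := fun t => (Commute.inv_left (h1 t))
  have i2 : ∀ t : H, z₂⁻¹ * t = t * z₂⁻¹ := fun t => (Commute.inv_left (h2 t))
  have m2 : ∀ s t : H, s * (z₂ * t) = z₂ * (s * t) := fun s t => by
    rw [← mul_assoc, ← h2, mul_assoc]
  have m1i : ∀ s t : H, s * (z₁⁻¹ * t) = z₁⁻¹ * (s * t) := fun s t => by
    rw [← mul_assoc, ← i1, mul_assoc]
  have m2i : ∀ s t : H, s * (z₂⁻¹ * t) = z₂⁻¹ * (s * t) := fun s t => by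
    rw [← mul_assoc, ← i2, mul_assoc]
  simp only [mul_inv_rev, mul_assoc]
  rw [m2 x]
  rw [m1i x⁻¹, m1i y, m1i x]
  rw [show y⁻¹ * z₂⁻¹ = z₂⁻¹ * y⁻¹ from (i2 y⁻¹).symm]
  rw [m2i x⁻¹, m2i y, m2i x]
  rw [m1i z₂]
  rw [mul_inv_cancel_left, mul_inv_cancel_left]

def eAux (p : ℕ) : ℕ → ℤ
  | 0 => 0
  | k + 1 => (1 - (p : ℤ)) * eAux p k - 1

lemma eAux_closed (p : ℕ) (k : ℕ) :
    ∃ s : ℤ, eAux p k = -(k : ℤ) + p * (k.choose 2) + p ^ 2 * s := by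
  induction k with
  | zero => exact ⟨0, by simp [eAux]⟩
  | succ k ih =>
    obtain ⟨s, hs⟩ := ih
    refine ⟨s - (k.choose 2) - p * s, ?_⟩
    have hch : (((k + 1).choose 2 : ℕ) : ℤ) = (k.choose 2 : ℤ) + k := by
      rw [Nat.choose_succ_succ k 1, Nat.choose_one_right]
      push_cast
      ring
    show (1 - (p : ℤ)) * eAux p k - 1 = _
    rw [hs, hch]
    push_cast
    ring

set_option maxHeartbeats 2000000 in
theorem keyReg {p : ℕ} (hp : p.Prime) (hodd : Odd p) {G : Type*} [Group G] {a b c : G}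
    (hgen : Subgroup.closure ({a, b, c} : Set G) = ⊤)
    (ha : orderOf a = p ^ 2) (hc : orderOf c = p)
    (hab : Commute a b) (hbc : Commute b c)
    (hac : a * c * a⁻¹ * c⁻¹ = a ^ p)
    {f : G → G → ℂˣ} (hf : IsCocycle f) (x : G) :
    f (a ^ p) x = f x (a ^ p) := by
  set U : Tw f hf := Tw.mk hf 1 a with hU
  set V : Tw f hf := Tw.mk hf 1 c with hV
  set W : Tw f hf := Tw.mk hf 1 b with hW
  set Q : Tw f hf := U * V * U⁻¹ * V⁻¹ with hQ
  have hUb : U.base = a := rfl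
  have hVb : V.base = c := rfl
  have hWb : W.base = b := rfl
  have hQb : Q.base = a ^ p := by
    rw [hQ]
    simp only [Tw.base_mul, Tw.base_inv, hUb, hVb]
    exact hac
  -- central elements
  have hU2c : ∀ y : Tw f hf, U ^ (p ^ 2) * y = y * U ^ (p ^ 2) := by
    refine fun y => Tw.central_of ?_ y
    rw [Tw.base_pow, hUb, ← ha]
    exact pow_orderOf_eq_one a
  have hVpc : ∀ y : Tw f hf, V ^ p * y = y * V ^ p := by
    refine fun y => Tw.central_of ?_ y
    rw [Tw.base_pow, hVb, ← hc]
    exact pow_orderOf_eq_one c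
  set D : Tw f hf := U ^ p * Q⁻¹ with hD
  have hDb : D.base = 1 := by
    rw [hD, Tw.base_mul, Tw.base_inv, Tw.base_pow, hUb, hQb, mul_inv_cancel]
  have hDc : ∀ y : Tw f hf, D * y = y * D := fun y => Tw.central_of hDb y
  have hUpQ : U ^ p = D * Q := by rw [hD, inv_mul_cancel_right]
  have hUQ : Commute U Q := by
    have h1 : Commute U D := (hDc U).symm
    have h2 : Commute U (U ^ p) := (Commute.refl U).pow_right p
    have h3 : Commute U (D⁻¹ * U ^ p) := (h1.inv_right).mul_right h2
    rwa [show D⁻¹ * U ^ p = Q from by rw [hUpQ, inv_mul_cancel_left]] at h3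
  -- conjugation of V by powers of U
  have hUVc : U * V * U⁻¹ = Q * V := by rw [hQ]; group
  have hconj : ∀ k : ℕ, U ^ k * V * (U ^ k)⁻¹ = Q ^ k * V := by
    intro k
    induction k with
    | zero => simp
    | succ k ih =>
      calc U ^ (k + 1) * V * (U ^ (k + 1))⁻¹
          = U * (U ^ k * V * (U ^ k)⁻¹) * U⁻¹ := by group
        _ = U * (Q ^ k * V) * U⁻¹ := by rw [ih]
        _ = (U * Q ^ k * U⁻¹) * (U * V * U⁻¹) := by group
        _ = Q ^ k * (Q * V) := by
            rw [hUVc, (hUQ.pow_right k).eq, mul_inv_cancel_right]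
        _ = Q ^ (k + 1) * V := by rw [pow_succ]; group
  have h5 : Q * V * Q⁻¹ = Q ^ p * V := by
    have h6 := hconj p
    rw [hUpQ] at h6
    have h7 : (D * Q) * V * (D * Q)⁻¹ = D * (Q * V * Q⁻¹) * D⁻¹ := by group
    rw [h7, hDc (Q * V * Q⁻¹), mul_inv_cancel_right] at h6
    exact h6
  have h8 : Q ^ (-(p : ℤ)) * (Q * V * Q⁻¹) * Q = V * Q := by rw [h5]; group
  have h9 : V * Q * V⁻¹ = Q ^ ((1 : ℤ) - (p : ℤ)) := by rw [← h8]; group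
  have h10 : ∀ m : ℤ, V * Q ^ m * V⁻¹ = Q ^ ((1 - (p : ℤ)) * m) := by
    intro m
    rw [← conj_zpow, h9, ← zpow_mul]
  have hVU : V * U * V⁻¹ = Q⁻¹ * U := by rw [hQ]; group
  have hkV : ∀ k : ℕ, V ^ k * U * (V ^ k)⁻¹ = Q ^ (eAux p k) * U := by
    intro k
    induction k with
    | zero => simp [eAux]
    | succ k ih =>
      calc V ^ (k + 1) * U * (V ^ (k + 1))⁻¹
          = V * (V ^ k * U * (V ^ k)⁻¹) * V⁻¹ := by group
        _ = V * (Q ^ (eAux p k) * U) * V⁻¹ := by rw [ih]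
        _ = (V * Q ^ (eAux p k) * V⁻¹) * (V * U * V⁻¹) := by group
        _ = Q ^ ((1 - (p : ℤ)) * eAux p k) * (Q⁻¹ * U) := by rw [h10, hVU]
        _ = Q ^ (eAux p (k + 1)) * U := by
            rw [show eAux p (k + 1) = (1 - (p : ℤ)) * eAux p k - 1 from rfl, zpow_sub, zpow_one]
            group
  have h11 : V ^ p * U * (V ^ p)⁻¹ = U := by rw [hVpc U, mul_inv_cancel_right]
  have h13 : Q ^ (eAux p p) = 1 := by
    have h12 : Q ^ (eAux p p) * U = 1 * U := by rw [← hkV p, h11, one_mul]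
    exact mul_right_cancel h12
  -- Q ^ (p^2) = 1
  have h16n : Q ^ (p ^ 2) = 1 := by
    have h14 : V * U ^ (p ^ 2) * V⁻¹ = Q⁻¹ ^ (p ^ 2) * U ^ (p ^ 2) := by
      rw [← conj_pow, hVU]
      exact (hUQ.symm.inv_left).mul_pow (p ^ 2)
    have h15 : V * U ^ (p ^ 2) * V⁻¹ = U ^ (p ^ 2) := by
      rw [← hU2c V, mul_inv_cancel_right]
    rw [h15] at h14
    have h17 : Q⁻¹ ^ (p ^ 2) * U ^ (p ^ 2) = 1 * U ^ (p ^ 2) := by rw [← h14, one_mul]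
    have h18 : Q⁻¹ ^ (p ^ 2) = 1 := mul_right_cancel h17
    rw [inv_pow] at h18
    exact inv_eq_one.mp h18
  -- Q ^ p = 1
  have hpne2 : p ≠ 2 := by
    rintro rfl
    exact absurd hodd (by decide)
  have hp3 : 2 < p := by
    have := hp.two_le
    omega
  obtain ⟨s, hs⟩ := eAux_closed p p
  obtain ⟨m, hm⟩ := Nat.Prime.dvd_choose_self hp (by norm_num) hp3
  have hep : eAux p p = -(p : ℤ) + (p : ℤ) ^ 2 * (m + s) := by
    rw [hs, hm]
    push_cast
    ring
  have hQe : Q ^ (p : ℤ) = 1 := by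
    have e1 : Q ^ ((p : ℤ) ^ 2 * (m + s)) = 1 := by
      rw [zpow_mul, show ((p : ℤ) ^ 2) = ((p ^ 2 : ℕ) : ℤ) by push_cast; ring,
        zpow_natCast, h16n, one_zpow]
    have e2 : (p : ℤ) = (p : ℤ) ^ 2 * (m + s) - eAux p p := by rw [hep]; ring
    rw [e2, zpow_sub, e1, h13, one_mul, inv_one]
  have hQp : Q ^ p = 1 := by
    rw [← zpow_natCast Q p]
    exact hQe
  -- Commute facts
  have hQV : Commute Q V := by
    have h19 := h5
    rw [hQp, one_mul] at h19
    exact mul_inv_eq_iff_eq_mul.mp h19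
  have hUpV : Commute (U ^ p) V := by
    rw [hUpQ]
    exact Commute.mul_left (hDc V) hQV
  -- Commute (U^p) W
  set E1 : Tw f hf := W * U * W⁻¹ * U⁻¹ with hE1
  set E2 : Tw f hf := W * V * W⁻¹ * V⁻¹ with hE2
  have hE1b : E1.base = 1 := by
    rw [hE1]
    simp only [Tw.base_mul, Tw.base_inv, hUb, hWb]
    rw [← hab]
    group
  have hE2b : E2.base = 1 := by
    rw [hE2]
    simp only [Tw.base_mul, Tw.base_inv, hVb, hWb]
    rw [hbc]
    group
  have hE1c : ∀ y : Tw f hf, E1 * y = y * E1 := fun y => Tw.central_of hE1b y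
  have hE2c : ∀ y : Tw f hf, E2 * y = y * E2 := fun y => Tw.central_of hE2b y
  have hWU : W * U * W⁻¹ = E1 * U := by rw [hE1]; group
  have hWV : W * V * W⁻¹ = E2 * V := by rw [hE2]; group
  have hWQ : W * Q * W⁻¹ = Q := by
    have h20 : W * Q * W⁻¹
        = (W * U * W⁻¹) * (W * V * W⁻¹) * (W * U * W⁻¹)⁻¹ * (W * V * W⁻¹)⁻¹ := by
      rw [hQ]
      group
    rw [h20, hWU, hWV, hQ]
    exact central_conj_commutator hE1c hE2c
  have hWQc : Commute W Q := mul_inv_eq_iff_eq_mul.mp hWQ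
  have hUpW : Commute (U ^ p) W := by
    rw [hUpQ]
    exact Commute.mul_left (hDc W) hWQc.symm
  -- the subgroup of elements whose canonical lift commutes with U^p
  let S : Subgroup G :=
    { carrier := {g : G | Commute (U ^ p) (Tw.mk hf 1 g)}
      one_mem' := (Tw.central_of (rfl : (Tw.mk hf 1 (1 : G)).base = 1) (U ^ p)).symm
      mul_mem' := fun {g h} hg hh => by
        refine Tw.commute_of_base_eq (x := Tw.mk hf 1 g * Tw.mk hf 1 h) ?_ (hg.mul_right hh)
        simp [Tw.base_mul, Tw.base_mk]
      inv_mem' := fun {g} hg => by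
        refine Tw.commute_of_base_eq (x := (Tw.mk hf 1 g)⁻¹) ?_ hg.inv_right
        simp [Tw.base_inv, Tw.base_mk] }
  have hScl : ∀ g : G, g ∈ S := by
    have hle : Subgroup.closure ({a, b, c} : Set G) ≤ S := by
      rw [Subgroup.closure_le]
      intro g hg
      rcases hg with h | h | h
      · subst h
        exact ((Commute.refl U).pow_left p : Commute (U ^ p) U)
      · subst h
        exact hUpW
      · simp only [Set.mem_singleton_iff] at h
        subst h
        exact hUpV
    intro g
    exact hle (by rw [hgen]; trivial)
  have hfin : Commute (Tw.mk hf 1 (a ^ p)) (Tw.mk hf 1 x) := by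
    have h21 : Commute (Tw.mk hf 1 x) (U ^ p) := (hScl x).symm
    have h22 := Tw.commute_of_base_eq
      (x := U ^ p) (y := Tw.mk hf 1 (a ^ p))
      (by rw [Tw.base_pow, hUb, Tw.base_mk]) h21
    exact h22.symm
  have h23 := congrArg Tw.sc hfin
  simpa [Tw.sc_mul, Tw.sc_mk, Tw.base_mk] using h23


/-- Let `G` be the group of order `p^4` (`p` an odd prime) generated by `a, b, c` with
relations `a^{p²} = b^p = c^p = 1`, `[a,b] = [b,c] = 1`, `[a,c] = a^p`.  Then for every
2-cocycle `f ∈ Z²(G, ℂ*)` the element `a^p` is `f`-regular; in particular `G` is not of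
central type. -/
theorem apow_fRegular_of_group_ix {p : ℕ} (hp : p.Prime) (hodd : Odd p)
    {G : Type*} [Group G] (a b c : G)
    (hcard : Nat.card G = p ^ 4)
    (hgen : Subgroup.closure ({a, b, c} : Set G) = ⊤)
    (ha : orderOf a = p ^ 2) (hb : orderOf b = p) (hc : orderOf c = p)
    (hab : Commute a b) (hbc : Commute b c)
    (hac : a * c * a⁻¹ * c⁻¹ = a ^ p) :
    (∀ f : G → G → ℂˣ, IsCocycle f → IsFRegular f (a ^ p)) ∧ ¬ IsCentralType G := by
  constructor
  · intro f hf x _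
    exact keyReg hp hodd hgen ha hc hab hbc hac hf x
  · rintro ⟨f, hf, hnd⟩
    have h1 : a ^ p = 1 :=
      hnd _ (fun x _ => keyReg hp hodd hgen ha hc hab hbc hac hf x)
    have h2 : orderOf a ∣ p := orderOf_dvd_of_pow_eq_one h1
    rw [ha] at h2
    have h3 := Nat.le_of_dvd hp.pos h2
    nlinarith [hp.two_le]
end

section
/- Let G = ⟨a, b⟩ be the group of order 16 with a⁴ = b⁴ = 1 and b a b^{-1} = a^{-1} (equivalently [a,b] = a²). Then for every 2-cocycle f ∈ Z²(G, ℂ*), the element b² is f-regular; in particular G is not of central type. -/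
/-- Let `G = ⟨a, b⟩` be the group of order 16 with `a⁴ = b⁴ = 1` and `b a b⁻¹ = a⁻¹`
(equivalently `[a,b] = a²`).  Then for every 2-cocycle `f ∈ Z²(G, ℂ*)` the element `b²` is
`f`-regular; in particular `G` is not of central type. -/
theorem bsq_fRegular_of_group16_viii {G : Type*} [Group G] (a b : G)
    (hcard : Nat.card G = 16)
    (hgen : Subgroup.closure ({a, b} : Set G) = ⊤)
    (ha : orderOf a = 4) (hb : orderOf b = 4)
    (hba : b * a * b⁻¹ = a⁻¹) :
    (∀ f : G → G → ℂˣ, IsCocycle f → IsFRegular f (b ^ 2)) ∧ ¬ IsCentralType G := by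
  have hba1 : b * a = a⁻¹ * b := by
    rw [← hba]; group
  have hba2 : b * a⁻¹ = a * b := by
    have h' : b * a⁻¹ * b⁻¹ = a := by
      rw [show b * a⁻¹ * b⁻¹ = (b * a * b⁻¹)⁻¹ by group, hba, inv_inv]
    conv_rhs => rw [← h']
    group
  have hcomm : b ^ 2 * a = a * b ^ 2 := by
    calc b ^ 2 * a = b * (b * a) := by rw [pow_two, mul_assoc]
    _ = b * (a⁻¹ * b) := by rw [hba1]
    _ = (b * a⁻¹) * b := by group
    _ = (a * b) * b := by rw [hba2]
    _ = a * b ^ 2 := by rw [pow_two, ← mul_assoc]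
  have hz : ∀ y : G, b ^ 2 * y = y * b ^ 2 := by
    have hZtop : Subgroup.centralizer ({b ^ 2} : Set G) = ⊤ := by
      rw [eq_top_iff, ← hgen]
      refine (Subgroup.closure_le _).mpr ?_
      rintro x (rfl | rfl)
      · rw [SetLike.mem_coe, Subgroup.mem_centralizer_singleton_iff]
        exact hcomm.symm
      · rw [SetLike.mem_coe, Subgroup.mem_centralizer_singleton_iff]
        group
    intro y
    have hy : y ∈ Subgroup.centralizer ({b ^ 2} : Set G) := by rw [hZtop]; trivial
    exact (Subgroup.mem_centralizer_singleton_iff.mp hy).symm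
  have main : ∀ f : G → G → ℂˣ, IsCocycle f → IsFRegular f (b ^ 2) := by
    intro f hf
    set g := b ^ 2 with hg
    have e1 : ∀ x, f x 1 = f 1 1 := by
      intro x
      have h := hf x 1 1
      simp only [mul_one] at h
      exact mul_right_cancel h
    have e2 : ∀ x, f 1 x = f 1 1 := by
      intro x
      have h := hf 1 1 x
      simp only [one_mul] at h
      exact (mul_right_cancel h).symm
    have hone : f g (1 : G) / f (1 : G) g = 1 := by
      rw [e1 g, e2 g]; exact div_self' _
    have hmul : ∀ x y : G, f g (x * y) / f (x * y) g
        = (f g x / f x g) * (f g y / f y g) := by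
      intro x y
      have h1 := hf g x y
      have h2 := hf x y g
      have h3 := hf x g y
      rw [hz x] at h1
      rw [← hz y] at h2
      -- h1 : f g x * f (x*g) y = f x y * f g (x*y)
      -- h2 : f x y * f (x*y) g = f y g * f x (g*y)
      -- h3 : f x g * f (x*g) y = f g y * f x (g*y)
      set A := f g x; set B := f (x * g) y; set C := f x y
      set D := f g (x * y); set E := f (x * y) g; set F := f y g
      set H := f x (g * y); set J := f x g; set K := f g y
      have key : C * (D * (J * F)) = C * ((A * K) * E) := by
        calc C * (D * (J * F)) = (C * D) * (J * F) := by ac_rfl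
        _ = (A * B) * (J * F) := by rw [h1]
        _ = (A * F) * (J * B) := by ac_rfl
        _ = (A * F) * (K * H) := by rw [h3]
        _ = (A * K) * (F * H) := by ac_rfl
        _ = (A * K) * (C * E) := by rw [h2]
        _ = C * ((A * K) * E) := by ac_rfl
      have key2 := mul_left_cancel key
      rw [div_mul_div_comm, div_eq_div_iff_mul_eq_mul]
      calc D * (J * F) = (A * K) * E := key2
      _ = A * K * E := by ac_rfl
    have hpb : f g b / f b g = 1 := by
      have h := hf b b b
      rw [show b * b = g by rw [hg, pow_two]] at h
      rw [mul_left_cancel h]; exact div_self' _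
    have hpab : f g (a * b) / f (a * b) g = 1 := by
      have h := hf (a * b) (a * b) (a * b)
      have hq : (a * b) * (a * b) = g := by
        calc a * b * (a * b) = a * (b * a) * b := by group
        _ = a * (a⁻¹ * b) * b := by rw [hba1]
        _ = g := by rw [hg, pow_two]; group
      rw [hq] at h
      rw [mul_left_cancel h]; exact div_self' _
    have hpa : f g a / f a g = 1 := by
      have h := hmul a b
      rw [hpab, hpb, mul_one] at h
      exact h.symm
    intro x hxc
    clear hxc
    have hx : x ∈ Subgroup.closure ({a, b} : Set G) := by rw [hgen]; trivial
    refine div_eq_one.mp ?_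
    induction hx using Subgroup.closure_induction with
    | mem y hy =>
      rcases hy with rfl | rfl
      · exact hpa
      · exact hpb
    | one => exact hone
    | mul y z _ _ py pz => rw [hmul, py, pz, mul_one]
    | inv y _ py =>
      have h := hmul y y⁻¹
      rw [mul_inv_cancel, hone, py, one_mul] at h
      exact h.symm
  refine ⟨main, ?_⟩
  rintro ⟨f, hc, hnd⟩
  have hb2 : b ^ 2 = 1 := hnd (b ^ 2) (main f hc)
  have hdvd : orderOf b ∣ 2 := orderOf_dvd_of_pow_eq_one hb2
  rw [hb] at hdvd
  norm_num at hdvd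
end

section
/- Let G = ⟨a, b, c⟩ be the group of order 16 with a⁴ = c² = 1, a² = b², [a,c] = [b,c] = 1, [a,b] = a². Then for every 2-cocycle f ∈ Z²(G, ℂ*), the element a² is f-regular; in particular G is not of central type. -/
section aux
variable {G : Type*} [Group G]

lemma cocycle_f_one_left (f : G → G → ℂˣ) (hf : IsCocycle f) (x : G) : f x 1 = f 1 1 := by
  have h := hf x 1 1
  simp only [mul_one] at h
  exact mul_right_cancel h

lemma cocycle_f_one_right (f : G → G → ℂˣ) (hf : IsCocycle f) (x : G) : f 1 x = f 1 1 := by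
  have h := hf 1 1 x
  simp only [one_mul] at h
  exact (mul_right_cancel h).symm

/-- The antisymmetrization `β(g,x) = f(g,x)/f(x,g)` is multiplicative in the second
argument as long as `g` commutes with both factors. -/
lemma cocycle_beta_mul (f : G → G → ℂˣ) (hf : IsCocycle f) {g x y : G}
    (hgx : g * x = x * g) (hgy : g * y = y * g) :
    f g (x * y) / f (x * y) g = (f g x / f x g) * (f g y / f y g) := by
  rw [div_mul_div_comm, div_eq_div_iff_mul_eq_mul]
  have h1 := hf g x y
  have h2 := hf x g y
  have h3 := hf x y g
  rw [hgx] at h1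
  rw [hgy] at h2
  have key : f g (x * y) * (f x g * f y g) * f x y
      = f g x * f g y * f (x * y) g * f x y := by
    rw [Units.ext_iff]
    push_cast
    have e1 : (f g x : ℂ) * f (x * g) y = (f x y : ℂ) * f g (x * y) := by exact_mod_cast h1
    have e2 : (f x g : ℂ) * f (x * g) y = (f g y : ℂ) * f x (y * g) := by exact_mod_cast h2
    have e3 : (f x y : ℂ) * f (x * y) g = (f y g : ℂ) * f x (y * g) := by exact_mod_cast h3
    linear_combination (-(f x g : ℂ) * f y g) * e1 + ((f y g : ℂ) * f g x) * e2
      + (-(f g x : ℂ) * f g y) * e3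
  exact mul_right_cancel key

/-- For any `g`, `f(g, g²) = f(g², g)`. -/
lemma cocycle_beta_sq (f : G → G → ℂˣ) (hf : IsCocycle f) (g : G) :
    f g (g ^ 2) = f (g ^ 2) g := by
  have h := cocycle_beta_mul f hf (g := g) (x := g) (y := g) rfl rfl
  simp only [div_self', mul_one] at h
  rw [pow_two]
  exact div_eq_one.mp h

end aux

/-- Let `G = ⟨a, b, c⟩` be the group of order 16 with `a⁴ = c² = 1`, `a² = b²`,
`[a,c] = [b,c] = 1`, `[a,b] = a²`.  Then for every 2-cocycle `f ∈ Z²(G, ℂ*)` the element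
`a²` is `f`-regular; in particular `G` is not of central type. -/
theorem asq_fRegular_of_group16_xi {G : Type*} [Group G] (a b c : G)
    (hcard : Nat.card G = 16)
    (hgen : Subgroup.closure ({a, b, c} : Set G) = ⊤)
    (ha : orderOf a = 4) (hc : orderOf c = 2) (hab2 : a ^ 2 = b ^ 2)
    (hac : Commute a c) (hbc : Commute b c)
    (hab : a * b * a⁻¹ * b⁻¹ = a ^ 2) :
    (∀ f : G → G → ℂˣ, IsCocycle f → IsFRegular f (a ^ 2)) ∧ ¬ IsCentralType G := by
  -- `a²` is central
  have hcent : ∀ x : G, a ^ 2 * x = x * a ^ 2 := by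
    have hsub : Subgroup.closure ({a, b, c} : Set G) ≤ Subgroup.centralizer ({a ^ 2} : Set G) := by
      rw [Subgroup.closure_le]
      intro x hx
      rw [SetLike.mem_coe, Subgroup.mem_centralizer_iff]
      intro h hh
      rw [Set.mem_singleton_iff] at hh
      subst hh
      rcases hx with rfl | rfl | rfl
      · exact ((Commute.refl x).pow_left 2).eq
      · rw [hab2]; exact ((Commute.refl x).pow_left 2).eq
      · exact (hac.pow_left 2).eq
    intro x
    have hx : x ∈ Subgroup.centralizer ({a ^ 2} : Set G) := by
      apply hsub; rw [hgen]; trivial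
    exact Subgroup.mem_centralizer_iff.mp hx (a ^ 2) rfl
  have main : ∀ f : G → G → ℂˣ, IsCocycle f → IsFRegular f (a ^ 2) := by
    intro f hf
    -- the character `φ(x) = f(a², x) / f(x, a²)` of `G`
    set φ : G →* ℂˣ :=
      { toFun := fun x => f (a ^ 2) x / f x (a ^ 2)
        map_one' := by
          show f (a ^ 2) (1 : G) / f (1 : G) (a ^ 2) = 1
          rw [cocycle_f_one_left f hf (a ^ 2), cocycle_f_one_right f hf (a ^ 2), div_self']
        map_mul' := fun x y => cocycle_beta_mul f hf (hcent x) (hcent y) } with hφ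
    have hφa : φ a = 1 := by
      show f (a ^ 2) a / f a (a ^ 2) = 1
      rw [← cocycle_beta_sq f hf a]
      exact div_self' _
    have hφb : φ b = 1 := by
      show f (a ^ 2) b / f b (a ^ 2) = 1
      rw [hab2, ← cocycle_beta_sq f hf b]
      exact div_self' _
    have hφc : φ c = 1 := by
      have hc1 : c * c = 1 := by
        have := pow_orderOf_eq_one c
        rwa [hc, pow_two] at this
      have h1 : f a (c * c) / f (c * c) a = (f a c / f c a) * (f a c / f c a) :=
        cocycle_beta_mul f hf hac.eq hac.eq
      rw [hc1, cocycle_f_one_right f hf a, cocycle_f_one_left f hf a, div_self'] at h1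
      have h3 : (f c a / f a c) * (f c a / f a c) = 1 := by
        calc (f c a / f a c) * (f c a / f a c)
            = ((f a c / f c a) * (f a c / f c a))⁻¹ := by rw [mul_inv, inv_div]
          _ = 1 := by rw [← h1, inv_one]
      have h2 : f c (a * a) / f (a * a) c = (f c a / f a c) * (f c a / f a c) :=
        cocycle_beta_mul f hf hac.symm.eq hac.symm.eq
      rw [h3] at h2
      show f (a ^ 2) c / f c (a ^ 2) = 1
      rw [pow_two, ← div_eq_one.mp h2]
      exact div_self' _
    have hker : ∀ x : G, φ x = 1 := by
      have hsub : Subgroup.closure ({a, b, c} : Set G) ≤ φ.ker := by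
        rw [Subgroup.closure_le]
        intro x hx
        rcases hx with rfl | rfl | rfl
        · exact hφa
        · exact hφb
        · exact hφc
      intro x
      exact hsub (by rw [hgen]; trivial)
    intro x _
    have h : f (a ^ 2) x / f x (a ^ 2) = 1 := hker x
    exact div_eq_one.mp h
  refine ⟨main, ?_⟩
  rintro ⟨f, hfc, hnd⟩
  have h1 : a ^ 2 = 1 := hnd (a ^ 2) (main f hfc)
  have h2 : orderOf a ∣ 2 := orderOf_dvd_of_pow_eq_one h1
  rw [ha] at h2
  omega
end

section
/- Let G be a finite group of central type of order n², i.e., there exists a 2-cocycle f ∈ Z²(G, ℂ*) such that the twisted group algebra ℂ^f G is simple (isomorphic to M_n(ℂ)). Then every element of G has order at most n. -/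
/-- Let `G` be a finite group of central type of order `n²`, i.e. there is a 2-cocycle
`f ∈ Z²(G, ℂ*)` such that the twisted group algebra `ℂ^f G` is simple, isomorphic to
`M_n(ℂ)` (realized here by a basis `{u_g}` of `M_n(ℂ)` with `u_x u_y = f(x,y) u_{xy}`).
Then every element of `G` has order at most `n`. -/
theorem orderOf_le_of_central_type {G : Type*} [Group G] [Finite G] {n : ℕ}
    (hcard : Nat.card G = n ^ 2)
    (f : G → G → ℂˣ) (hf : IsCocycle f)
    (b : Module.Basis G ℂ (Matrix (Fin n) (Fin n) ℂ))
    (hmul : ∀ x y : G, (b x) * (b y) = (f x y : ℂ) • b (x * y))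
    (g : G) : orderOf g ≤ n := by
  classical
  set M := Matrix (Fin n) (Fin n) ℂ
  -- Step 1: `b 1` is a scalar matrix `f 1 1 • 1`.
  -- First find a right inverse of left multiplication by `b 1`.
  have hb1 : b 1 = ((f 1 1 : ℂˣ) : ℂ) • (1 : M) := by
    set S : M →ₗ[ℂ] M := b.constr ℂ (fun x => (((f 1 x)⁻¹ : ℂˣ) : ℂ) • b x) with hS
    have hLS : ∀ m : M, b 1 * S m = m := by
      intro m
      have : (LinearMap.mulLeft ℂ (b 1)) ∘ₗ S = LinearMap.id := by
        apply b.ext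
        intro x
        simp only [LinearMap.comp_apply, hS, Module.Basis.constr_basis, LinearMap.id_apply,
          LinearMap.mulLeft_apply, Matrix.mul_smul, hmul 1 x, one_mul, smul_smul]
        simp
      simpa [LinearMap.mulLeft_apply] using congrArg (fun L => L m) this
    have h2 : b 1 * b 1 = ((f 1 1 : ℂˣ) : ℂ) • b 1 := by simpa using hmul 1 1
    have h3 : b 1 * b 1 * S 1 = (((f 1 1 : ℂˣ) : ℂ) • b 1) * S 1 := by rw [h2]
    rw [mul_assoc, hLS 1, mul_one, Matrix.smul_mul, hLS 1] at h3
    exact h3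
  set A : M := b g with hA
  -- Step 2: powers of `A` are unit multiples of basis vectors.
  have hpow : ∀ k : ℕ, ∃ c : ℂˣ, A ^ k = ((c : ℂˣ) : ℂ) • b (g ^ k) := by
    intro k
    induction k with
    | zero =>
      refine ⟨(f 1 1)⁻¹, ?_⟩
      rw [pow_zero, pow_zero, hb1, smul_smul]
      simp
    | succ k ih =>
      obtain ⟨c, hc⟩ := ih
      refine ⟨c * f (g ^ k) g, ?_⟩
      rw [pow_succ, hc, Matrix.smul_mul, hA, hmul, smul_smul, pow_succ]
      push_cast
      ring_nf
  set m := orderOf g with hm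
  -- Step 3: the powers `A^0, ..., A^(m-1)` are linearly independent.
  have hinj : Function.Injective (fun k : Fin m => g ^ (k : ℕ)) := by
    intro i j hij
    exact Fin.ext (pow_injOn_Iio_orderOf (by simpa [hm] using i.2) (by simpa [hm] using j.2) hij)
  have li0 : LinearIndependent ℂ (fun k : Fin m => b (g ^ (k : ℕ))) :=
    b.linearIndependent.comp _ hinj
  choose c hc using hpow
  have li : LinearIndependent ℂ (fun k : Fin m => A ^ (k : ℕ)) := by
    have := li0.units_smul (fun k : Fin m => c (k : ℕ))
    convert this using 1
    funext k
    simpa [Pi.smul_apply', Units.smul_def] using hc (k : ℕ)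
  -- Step 4: the minimal polynomial of `A` has degree at most `n`.
  have hint : IsIntegral ℂ A := ⟨A.charpoly, A.charpoly_monic, A.aeval_self_charpoly⟩
  have hmono : (minpoly ℂ A).Monic := minpoly.monic hint
  have hdeg : (minpoly ℂ A).natDegree ≤ n := by
    have h1 := Matrix.minpoly_dvd_charpoly A
    have h2 := Polynomial.natDegree_le_of_dvd h1 A.charpoly_monic.ne_zero
    rwa [Matrix.charpoly_natDegree_eq_dim, Fintype.card_fin] at h2
  -- Step 5: conclude
  by_contra hcon
  push_neg at hcon
  set p := minpoly ℂ A with hp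
  set d := p.natDegree with hd
  have hdm : d < m := lt_of_le_of_lt hdeg hcon
  have hsum : ∑ i : Fin m, p.coeff (i : ℕ) • A ^ (i : ℕ) = 0 := by
    have h0 : (Polynomial.aeval A) p = 0 := minpoly.aeval ℂ A
    rw [Polynomial.aeval_eq_sum_range] at h0
    rw [← h0]
    rw [Fin.sum_univ_eq_sum_range (fun i => p.coeff i • A ^ i)]
    symm
    apply Finset.sum_subset
    · intro x hx
      simp only [Finset.mem_range] at hx ⊢
      omega
    · intro x _ hx
      simp only [Finset.mem_range, not_lt] at hx
      have : p.coeff x = 0 := Polynomial.coeff_eq_zero_of_natDegree_lt (by omega)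
      simp [this]
  have := Fintype.linearIndependent_iff.mp li (fun i => p.coeff (i : ℕ)) hsum ⟨d, hdm⟩
  simp only at this
  rw [Polynomial.coeff_natDegree, hmono.leadingCoeff] at this
  exact one_ne_zero this
end
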